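/- Fix k ≥ 1 and t ≥ k+1. The number of monomials η^α = η_1^{α_1}⋯η_k^{α_k} of total degree t that are not divisible by η_i²η_j for any pair i < j equals 2^k − 1. -/

import Mathlib

theorem stmt9 (k t : ℕ) (hk : 1 ≤ k) (ht : k + 1 ≤ t) :
    Nat.card {α : Fin k → ℕ // (∑ i, α i = t) ∧
        ∀ i j : Fin k, i < j → ¬(2 ≤ α i ∧ 1 ≤ α j)} = 2 ^ k - 1 := by
  classical
  set P : (Fin k → ℕ) → Prop := fun α => (∑ i, α i = t) ∧
      ∀ i j : Fin k, i < j → ¬(2 ≤ α i ∧ 1 ≤ α j) with hP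
  have hcard : ∀ S : Finset (Fin k), S.card ≤ k := fun S => by
    simpa using S.card_le_univ
  set F : {S : Finset (Fin k) // S.Nonempty} → (Fin k → ℕ) :=
    fun S i => if i = S.1.max' S.2 then t - (S.1.card - 1) else if i ∈ S.1 then 1 else 0
    with hFdef
  have hsum : ∀ S, ∑ i, F S i = t := by
    intro S
    set m := S.1.max' S.2 with hm
    have hmS : m ∈ S.1 := S.1.max'_mem S.2
    have h1 : ∑ i, F S i = ∑ i ∈ S.1, F S i := by
      rw [eq_comm]
      apply Finset.sum_subset (Finset.subset_univ _)
      intro x _ hx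
      have hxm : x ≠ m := fun h => hx (h ▸ hmS)
      simp [hFdef, ← hm, hxm, hx]
    have h2 : ∑ i ∈ S.1, F S i = F S m + ∑ i ∈ S.1.erase m, F S i := by
      rw [← Finset.add_sum_erase _ _ hmS]
    have h3 : ∑ i ∈ S.1.erase m, F S i = S.1.card - 1 := by
      have hone : ∀ x ∈ S.1.erase m, F S x = 1 := by
        intro x hx
        have hxm : x ≠ m := Finset.ne_of_mem_erase hx
        have hxS : x ∈ S.1 := Finset.mem_of_mem_erase hx
        simp [hFdef, ← hm, hxm, hxS]
      rw [Finset.sum_congr rfl hone]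
      simp [Finset.card_erase_of_mem hmS]
    have hck : S.1.card ≤ k := hcard S.1
    have hFm : F S m = t - (S.1.card - 1) := by simp [hFdef, ← hm]
    have hc1 : 1 ≤ S.1.card := Finset.card_pos.mpr S.2
    omega
  have hP' : ∀ S, P (F S) := by
    intro S
    refine ⟨hsum S, ?_⟩
    intro i j hij ⟨h2i, h1j⟩
    set m := S.1.max' S.2 with hm
    have hi : i = m := by
      by_contra h
      by_cases hiS : i ∈ S.1 <;> simp [hFdef, ← hm, h, hiS] at h2i
    have hjm : j ≠ m := fun h => by omega
    have hjS : j ∈ S.1 := by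
      by_contra h
      simp [hFdef, ← hm, hjm, h] at h1j
    have := S.1.le_max' j hjS
    rw [← hm] at this
    omega
  have hinj : Function.Injective F := by
    intro S T h
    have hsupp : ∀ U : {S : Finset (Fin k) // S.Nonempty},
        Finset.univ.filter (fun i => F U i ≠ 0) = U.1 := by
      intro U
      ext i
      simp only [Finset.mem_filter, Finset.mem_univ, true_and]
      by_cases hi : i = U.1.max' U.2
      · have hmU : U.1.max' U.2 ∈ U.1 := U.1.max'_mem U.2
        have hck : U.1.card ≤ k := hcard U.1
        have hc1 : 1 ≤ U.1.card := Finset.card_pos.mpr U.2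
        subst hi
        simp only [hFdef, if_pos rfl]
        constructor
        · intro _; exact hmU
        · intro _; omega
      · by_cases hiU : i ∈ U.1 <;> simp [hFdef, hi, hiU]
    ext1
    rw [← hsupp S, ← hsupp T, h]
  have hsurj : ∀ α : Fin k → ℕ, P α → ∃ S, F S = α := by
    intro α ⟨hsumα, hcond⟩
    set S : Finset (Fin k) := Finset.univ.filter (fun i => α i ≠ 0) with hS
    have hSne : S.Nonempty := by
      by_contra h
      rw [Finset.not_nonempty_iff_eq_empty] at h
      have : ∀ i, α i = 0 := by
        intro i
        by_contra hi
        have : i ∈ S := by simp [hS, hi]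
        simp [h] at this
      rw [Finset.sum_congr rfl (fun i _ => this i)] at hsumα
      simp at hsumα
      omega
    refine ⟨⟨S, hSne⟩, ?_⟩
    set m := S.max' hSne with hm
    have hmS : m ∈ S := S.max'_mem hSne
    have hαm : α m ≠ 0 := by
      have := hmS; simp [hS] at this; exact this
    -- entries in S other than m are 1
    have hone : ∀ i ∈ S.erase m, α i = 1 := by
      intro i hi
      have him : i ≠ m := Finset.ne_of_mem_erase hi
      have hiS : i ∈ S := Finset.mem_of_mem_erase hi
      have hαi : α i ≠ 0 := by have := hiS; simp [hS] at this; exact this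
      have hilt : i < m := lt_of_le_of_ne (S.le_max' i hiS) him
      have := hcond i m hilt
      omega
    have hzero : ∀ i, i ∉ S → α i = 0 := by
      intro i hi
      by_contra h
      exact hi (by simp [hS, h])
    have hsum2 : α m + (S.card - 1) = t := by
      have h1 : ∑ i, α i = ∑ i ∈ S, α i := by
        rw [eq_comm]
        apply Finset.sum_subset (Finset.subset_univ _)
        intro x _ hx
        exact hzero x hx
      have h2 : ∑ i ∈ S, α i = α m + ∑ i ∈ S.erase m, α i := by
        rw [← Finset.add_sum_erase _ _ hmS]
      have h3 : ∑ i ∈ S.erase m, α i = S.card - 1 := by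
        rw [Finset.sum_congr rfl hone]
        simp [Finset.card_erase_of_mem hmS]
      omega
    funext i
    by_cases hi : i = m
    · subst hi
      simp only [hFdef, ← hm, if_pos rfl, if_true]
      have hck : S.card ≤ k := hcard S
      have hc1 : 1 ≤ S.card := Finset.card_pos.mpr hSne
      omega
    · by_cases hiS : i ∈ S
      · simp only [hFdef, ← hm, if_neg hi, if_pos hiS]
        exact (hone i (Finset.mem_erase.mpr ⟨hi, hiS⟩)).symm
      · simp only [hFdef, ← hm, if_neg hi, if_neg hiS]
        exact (hzero i hiS).symm
  have hbij : Function.Bijective (fun S : {S : Finset (Fin k) // S.Nonempty} =>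
      (⟨F S, hP' S⟩ : {α : Fin k → ℕ // P α})) := by
    constructor
    · intro S T h
      exact hinj (congrArg Subtype.val h)
    · rintro ⟨α, hα⟩
      obtain ⟨S, hSα⟩ := hsurj α hα
      exact ⟨S, Subtype.ext hSα⟩
  have h1 : Nat.card {α : Fin k → ℕ // P α} =
      Nat.card {S : Finset (Fin k) // S.Nonempty} :=
    (Nat.card_congr (Equiv.ofBijective _ hbij)).symm
  have h2 : Nat.card {S : Finset (Fin k) // S.Nonempty} = 2 ^ k - 1 := by
    rw [Nat.card_congr (Equiv.subtypeEquivRight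
      (fun S : Finset (Fin k) => Finset.nonempty_iff_ne_empty))]
    rw [Nat.card_eq_fintype_card]
    have := Fintype.card_subtype_compl (fun S : Finset (Fin k) => S = ∅)
    simp only [Fintype.card_subtype_eq] at this
    have heq : Fintype.card {S : Finset (Fin k) // ¬ S = ∅} =
        Fintype.card {S : Finset (Fin k) // S ≠ ∅} := rfl
    rw [← heq, this, Fintype.card_finset, Fintype.card_fin]
  calc Nat.card {α : Fin k → ℕ // P α} = _ := h1
    _ = 2 ^ k - 1 := h2
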